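/- Let n ≥ 1 be a natural number, p ∈ [0,1], δ ∈ (0,1), and let X be a random variable with the binomial distribution Bin(n,p). Then Pr(F_{n,p}(X) < δ) ≤ δ; that is, the probability that the binomial CDF evaluated at the observed count falls strictly below δ is at most δ. -/

import Mathlib

open scoped Classical BigOperators

/-- The probability mass function of the binomial distribution `Bin(n, p)` at `j`. -/
noncomputable def binomPMF (n : ℕ) (p : ℝ) (j : ℕ) : ℝ :=
  (n.choose j : ℝ) * p ^ j * (1 - p) ^ (n - j)

/-- The cumulative distribution function of `Bin(n, p)` at `k`:
`F_{n,p}(k) = Σ_{j=0}^{min(k,n)} C(n,j) p^j (1-p)^{n-j}`. -/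
noncomputable def binomCDF (n : ℕ) (p : ℝ) (k : ℕ) : ℝ :=
  ∑ j ∈ Finset.range (min k n + 1), binomPMF n p j

/-- One-sided Clopper–Pearson upper confidence bound at count `k` and level `δ`:
`sup {R ∈ [0,1] : F_{n,R}(k) ≥ δ}`. -/
noncomputable def cpUpper (n : ℕ) (δ : ℝ) (k : ℕ) : ℝ :=
  sSup {R : ℝ | R ∈ Set.Icc (0 : ℝ) 1 ∧ δ ≤ binomCDF n R k}

/-- One-sided Clopper–Pearson lower confidence bound at count `k` and level `δ`:
`inf {R ∈ [0,1] : 1 - F_{n,R}(k-1) ≥ δ}` for `k ≥ 1`, and `0` for `k = 0`. -/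
noncomputable def cpLower (n : ℕ) (δ : ℝ) : ℕ → ℝ
  | 0 => 0
  | k + 1 => sInf {R : ℝ | R ∈ Set.Icc (0 : ℝ) 1 ∧ δ ≤ 1 - binomCDF n R k}

lemma binomPMF_nonneg (n : ℕ) (p : ℝ) (hp : p ∈ Set.Icc (0 : ℝ) 1) (j : ℕ) :
    0 ≤ binomPMF n p j := by
  unfold binomPMF
  have h1 : 0 ≤ p := hp.1
  have h2 : 0 ≤ 1 - p := by linarith [hp.2]
  positivity

lemma binomCDF_mono (n : ℕ) (p : ℝ) (hp : p ∈ Set.Icc (0 : ℝ) 1) {j k : ℕ} (h : j ≤ k) :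
    binomCDF n p j ≤ binomCDF n p k := by
  unfold binomCDF
  apply Finset.sum_le_sum_of_subset_of_nonneg
  · exact Finset.range_subset_range.2 (by omega)
  · intro i _ _; exact binomPMF_nonneg n p hp i

/-- The probability that the binomial CDF evaluated at the observed count falls strictly
below δ is at most δ: Pr(F_{n,p}(X) < δ) ≤ δ. -/
theorem prob_binomCDF_lt_le
    (n : ℕ) (hn : 1 ≤ n) (p : ℝ) (hp : p ∈ Set.Icc (0 : ℝ) 1)
    (δ : ℝ) (hδ : δ ∈ Set.Ioo (0 : ℝ) 1) :
    ∑ j ∈ Finset.range (n + 1),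
      (if binomCDF n p j < δ then binomPMF n p j else 0) ≤ δ := by
  rw [← Finset.sum_filter]
  set S := (Finset.range (n + 1)).filter (fun j => binomCDF n p j < δ) with hS
  rcases S.eq_empty_or_nonempty with h | h
  · rw [h, Finset.sum_empty]; exact le_of_lt hδ.1
  · set k := S.max' h with hk
    have hkS : k ∈ S := S.max'_mem h
    have hkn : k ≤ n := by
      have := (Finset.mem_filter.1 hkS).1
      simp [Finset.mem_range] at this; omega
    have hkδ : binomCDF n p k < δ := (Finset.mem_filter.1 hkS).2
    have hSeq : S = Finset.range (k + 1) := by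
      ext j
      simp only [hS, Finset.mem_filter, Finset.mem_range]
      constructor
      · intro ⟨_, hj⟩
        have : j ∈ S := Finset.mem_filter.2 ⟨Finset.mem_range.2 ‹j < n + 1›, hj⟩
        exact Nat.lt_succ_of_le (S.le_max' j this)
      · intro hj
        have hjk : j ≤ k := by omega
        exact ⟨by omega, lt_of_le_of_lt (binomCDF_mono n p hp hjk) hkδ⟩
    rw [hSeq]
    have : binomCDF n p k = ∑ j ∈ Finset.range (k + 1), binomPMF n p j := by
      unfold binomCDF; rw [min_eq_left hkn]
    rw [← this]
    exact le_of_lt hkδ
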